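/- Let a_n = 2^(2n+2) and b_n = 2^(2n). Then the series ∑_{n=1}^∞ b_n / (a_1 ⋯ a_n) converges, and the real number x = ∑_{n=1}^∞ b_n / (a_1 ⋯ a_n) satisfies ∑_{n=1}^∞ (a_n/b_n) · ‖a_1 ⋯ a_{n-1} · x‖ = ∞, where ‖y‖ denotes the distance from y to the nearest integer. -/

import Mathlib

/-- Distance from a real number to the nearest integer. -/
noncomputable def distToInt (y : ℝ) : ℝ := |y - round y|

private noncomputable def cseq (n : ℕ) : ℝ := ((2:ℝ) ^ (n^2+3*n+2))⁻¹

private lemma c_summable : Summable cseq := by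
  apply Summable.of_nonneg_of_le (fun n => by rw [cseq]; positivity)
    (fun n => ?_) summable_geometric_two
  rw [cseq, one_div, inv_pow]
  apply inv_anti₀ (by positivity)
  exact pow_le_pow_right₀ one_le_two (by nlinarith)

private lemma pow_div_pow' (A B : ℕ) (h : B ≤ A) : (2:ℝ)^B / 2^A = (2^(A-B))⁻¹ := by
  rw [pow_sub₀ (2:ℝ) two_ne_zero h, mul_inv, inv_inv, div_eq_mul_inv, mul_comm]

theorem stmt_0 (a b : ℕ → ℝ)
    (ha : ∀ n, a n = 2 ^ (2 * n + 2)) (hb : ∀ n, b n = 2 ^ (2 * n)) :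
    (Summable fun n : ℕ => b (n + 1) / ∏ i ∈ Finset.Icc 1 (n + 1), a i) ∧
    ∀ x : ℝ, x = (∑' n : ℕ, b (n + 1) / ∏ i ∈ Finset.Icc 1 (n + 1), a i) →
      ¬ Summable (fun n : ℕ =>
        (a (n + 1) / b (n + 1)) * distToInt ((∏ i ∈ Finset.Icc 1 n, a i) * x)) := by
  have hprod : ∀ n : ℕ, ∏ i ∈ Finset.Icc 1 n, a i = 2^(n^2+3*n) := by
    intro n
    induction n with
    | zero => simp
    | succ n ih =>
      rw [Finset.prod_Icc_succ_top (Nat.le_add_left 1 n), ih, ha]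
      rw [← pow_add]
      congr 1
      ring
  have hterm : ∀ n : ℕ, b (n+1) / ∏ i ∈ Finset.Icc 1 (n+1), a i = cseq n := by
    intro n
    rw [hb, hprod, cseq]
    have h1 : 2*(n+1) = 2*n+2 := by ring
    have h2 : (n+1)^2+3*(n+1) = (n^2+3*n+2) + (2*n+2) := by ring
    rw [h1, h2, pow_div_pow' ((n^2+3*n+2)+(2*n+2)) (2*n+2) (by omega), Nat.add_sub_cancel]
  have hfun : (fun n : ℕ => b (n+1) / ∏ i ∈ Finset.Icc 1 (n+1), a i) = cseq :=
    funext hterm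
  refine ⟨hfun ▸ c_summable, ?_⟩
  intro x hx
  rw [hfun] at hx
  -- lower bound on each term
  have hlow : ∀ n : ℕ, 1 ≤ (a (n+1) / b (n+1)) * distToInt ((∏ i ∈ Finset.Icc 1 n, a i) * x) := by
    intro n
    have hratio : a (n+1) / b (n+1) = 4 := by
      rw [ha, hb, pow_add, mul_comm, mul_div_assoc, div_self (by positivity), mul_one]
      norm_num
    set P : ℝ := (2:ℝ)^(n^2+3*n) with hP
    have hPpos : 0 < P := by positivity
    -- split the sum
    have hsplit := Summable.sum_add_tsum_nat_add (f := cseq) (n+1) c_summable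
    set T : ℝ := ∑' k : ℕ, cseq (k + (n+1)) with hTdef
    have hxeq : x = (∑ m ∈ Finset.range (n+1), cseq m) + T := by rw [hx, ← hsplit]
    -- the integer part
    set K : ℕ := ∑ m ∈ Finset.range n, 2^(n^2+3*n - (m^2+3*m+2)) with hKdef
    have hKeq : P * ∑ m ∈ Finset.range n, cseq m = (K : ℝ) := by
      rw [Finset.mul_sum, hKdef]
      push_cast
      apply Finset.sum_congr rfl
      intro m hm
      have hmn : m < n := Finset.mem_range.mp hm
      have hle : m^2+3*m+2 ≤ n^2+3*n := by nlinarith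
      rw [cseq, hP, ← div_eq_mul_inv, pow_sub₀ (2:ℝ) two_ne_zero hle, div_eq_mul_inv]
    have hquarter : P * cseq n = 1/4 := by
      rw [cseq, hP,
        show ((2:ℝ)^(n^2+3*n+2))⁻¹ = ((2:ℝ)^(n^2+3*n) * 2^2)⁻¹ by rw [← pow_add],
        mul_inv, ← mul_assoc, mul_inv_cancel₀ (by positivity), one_mul]
      norm_num
    -- bound the tail
    have hT0 : 0 ≤ T := tsum_nonneg (fun k => by rw [cseq]; positivity)
    have hTle : T ≤ 2 * cseq (n+1) := by
      have hg : Summable (fun k : ℕ => cseq (n+1) * (1/2)^k) :=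
        summable_geometric_two.mul_left _
      have hb' : ∀ k : ℕ, cseq (k + (n+1)) ≤ cseq (n+1) * (1/2)^k := by
        intro k
        rw [cseq, cseq, one_div, inv_pow, ← mul_inv, ← pow_add]
        apply inv_anti₀ (by positivity)
        exact pow_le_pow_right₀ one_le_two (by nlinarith)
      calc T ≤ ∑' k : ℕ, cseq (n+1) * (1/2)^k := Summable.tsum_le_tsum hb'
            (c_summable.comp_injective (add_left_injective (n+1))) hg
        _ = cseq (n+1) * 2 := by rw [tsum_mul_left, tsum_geometric_two]
        _ = 2 * cseq (n+1) := by ring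
    have hPT : P * T ≤ 1/8 := by
      have hQ : (64:ℝ) ≤ 2^(2*n+6) := by
        calc (64:ℝ) = 2^6 := by norm_num
          _ ≤ 2^(2*n+6) := pow_le_pow_right₀ one_le_two (by omega)
      have h1 : P * (2 * cseq (n+1)) ≤ 1/8 := by
        rw [cseq, hP,
          show ((2:ℝ)^((n+1)^2+3*(n+1)+2))⁻¹
              = ((2:ℝ)^(n^2+3*n))⁻¹ * ((2:ℝ)^(2*n+6))⁻¹ by
            rw [← mul_inv, ← pow_add]; congr 2; ring]
        have heq : (2:ℝ)^(n^2+3*n) * (2 * (((2:ℝ)^(n^2+3*n))⁻¹ * ((2:ℝ)^(2*n+6))⁻¹))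
            = 2 * ((2:ℝ)^(2*n+6))⁻¹ := by
          field_simp
        rw [heq]
        have : ((2:ℝ)^(2*n+6))⁻¹ ≤ 64⁻¹ := by
          apply inv_anti₀ (by norm_num) hQ
        linarith
      calc P * T ≤ P * (2 * cseq (n+1)) := mul_le_mul_of_nonneg_left hTle hPpos.le
        _ ≤ 1/8 := h1
    have hPT0 : 0 ≤ P * T := mul_nonneg hPpos.le hT0
    -- P * x = K + (1/4 + P*T)
    set t : ℝ := 1/4 + P * T with htdef
    have hPx : P * x = (K : ℝ) + t := by
      rw [hxeq, mul_add, Finset.sum_range_succ, mul_add, hKeq, hquarter, htdef]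
      ring
    clear_value t
    have ht1 : 1/4 ≤ t := by rw [htdef]; linarith
    have ht2 : t < 1/2 := by rw [htdef]; linarith
    have hround : round (P * x) = (K : ℤ) := by
      rw [hPx]
      have hcast : ((K:ℕ):ℝ) = (((K:ℕ):ℤ):ℝ) := by push_cast; ring
      rw [hcast, round_intCast_add]
      have hrt : round t = 0 := by
        rw [round_eq, Int.floor_eq_zero_iff]
        rw [Set.mem_Ico]
        exact ⟨by linarith, by linarith⟩
      rw [hrt, add_zero]
    have hdist : distToInt ((∏ i ∈ Finset.Icc 1 n, a i) * x) = t := by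
      rw [distToInt, hprod, ← hP, hround, hPx]
      push_cast
      rw [add_sub_cancel_left]
      exact abs_of_nonneg (by linarith)
    rw [hdist, hratio]
    linarith
  -- conclude non-summability
  intro hS
  have htend := hS.tendsto_atTop_zero
  have hev := htend.eventually_lt_const (by norm_num : (0:ℝ) < 1)
  obtain ⟨n, hn⟩ := hev.exists
  exact absurd (hlow n) (not_le.mpr hn)
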